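/- Let p > 3 be prime and a ∈ F_p nonzero. For S_λ = Σ_{x ∈ F_p} σ(x³ + a x² + λ x), the variance (1/p)Σ_λ S_λ² − ((1/p)Σ_λ S_λ)² equals p − 2 − σ(−1). -/

import Mathlib

open Finset

section aux
variable {p : ℕ} [Fact p.Prime]

lemma sumA (hp2 : ringChar (ZMod p) ≠ 2) {b : ZMod p} (hb : b ≠ 0) :
    ∑ x : ZMod p, quadraticChar (ZMod p) (x * (x + b)) = -1 := by
  classical
  set χ := quadraticChar (ZMod p) with hχ
  have h0 : ∑ x ∈ (univ : Finset (ZMod p)).erase 0, χ (x * (x + b)) =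
      ∑ x : ZMod p, χ (x * (x + b)) := by
    apply Finset.sum_subset (Finset.subset_univ _)
    intro x _ hx
    have : x = 0 := by simpa using hx
    simp [this, hχ]
  rw [← h0]
  have h1 : ∑ x ∈ (univ : Finset (ZMod p)).erase 0, χ (x * (x + b)) =
      ∑ t ∈ (univ : Finset (ZMod p)).erase 1, χ t := by
    apply Finset.sum_nbij' (fun x => 1 + b * x⁻¹) (fun t => b * (t - 1)⁻¹)
    · intro x hx
      have hx0 : x ≠ 0 := by simpa using hx
      simp only [Finset.mem_erase, Finset.mem_univ, and_true]
      intro h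
      have : b * x⁻¹ = 0 := by linear_combination h
      rcases mul_eq_zero.mp this with h' | h'
      · exact hb h'
      · exact hx0 (inv_eq_zero.mp h')
    · intro t ht
      have ht1 : t ≠ 1 := by simpa using ht
      simp only [Finset.mem_erase, Finset.mem_univ, and_true]
      intro h
      rcases mul_eq_zero.mp h with h' | h'
      · exact hb h'
      · exact ht1 (by have := inv_eq_zero.mp h'; linear_combination this)
    · intro x hx
      have hx0 : x ≠ 0 := by simpa using hx
      have hbx : b * x⁻¹ ≠ 0 := mul_ne_zero hb (inv_ne_zero hx0)
      field_simp
      have hxb : x + b - x = b := by ring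
      rw [hxb, div_self hb]
    · intro t ht
      have ht1 : t - 1 ≠ 0 := sub_ne_zero.mpr (by simpa using ht)
      field_simp
      ring
    · intro x hx
      have hx0 : x ≠ 0 := by simpa using hx
      have key : x * (x + b) = x ^ 2 * (1 + b * x⁻¹) := by
        field_simp
      rw [key, map_mul, quadraticChar_sq_one' hx0, one_mul]
  rw [h1]
  have h2 : χ 1 + ∑ t ∈ (univ : Finset (ZMod p)).erase 1, χ t = ∑ t : ZMod p, χ t :=
    Finset.add_sum_erase _ _ (Finset.mem_univ 1)
  have h3 : ∑ t : ZMod p, χ t = 0 := quadraticChar_sum_zero hp2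
  have h4 : χ 1 = 1 := by simp [hχ]
  linarith [h2, h3, h4]

end aux

section aux2
variable {p : ℕ} [Fact p.Prime]

lemma sumK (hp2 : ringChar (ZMod p) ≠ 2) (u v : ZMod p) :
    ∑ l : ZMod p, quadraticChar (ZMod p) ((u + l) * (v + l)) =
      if u = v then (p : ℤ) - 1 else -1 := by
  classical
  set χ := quadraticChar (ZMod p) with hχ
  have hre : ∑ l : ZMod p, χ ((u + l) * (v + l)) =
      ∑ m : ZMod p, χ (m * (m + (v - u))) := by
    refine (Fintype.sum_bijective (fun m : ZMod p => m - u)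
      (Equiv.subRight u).bijective _ _ ?_).symm
    intro m
    congr 1
    ring
  rw [hre]
  by_cases huv : u = v
  · simp only [huv, sub_self, add_zero, if_pos]
    have : ∀ m : ZMod p, χ (m * m) = 1 - (if m = 0 then (1:ℤ) else 0) := by
      intro m
      by_cases hm : m = 0
      · simp [hm, hχ]
      · have : m * m = m ^ 2 := by ring
        rw [this, quadraticChar_sq_one' hm]
        simp [hm]
    rw [Finset.sum_congr rfl (fun m _ => this m), Finset.sum_sub_distrib,
      Finset.sum_const, Finset.sum_ite_eq' _ (0 : ZMod p) (fun _ => (1:ℤ))]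
    simp [ZMod.card]
  · rw [if_neg huv]
    exact sumA hp2 (sub_ne_zero.mpr (fun h => huv h.symm))

end aux2

section aux3
variable {p : ℕ} [Fact p.Prime]

lemma filt (a x : ZMod p) :
    (univ : Finset (ZMod p)).filter (fun y => x^2 + a*x = y^2 + a*y) = {x, -a-x} := by
  ext y
  simp only [mem_filter, mem_univ, true_and, mem_insert, mem_singleton]
  constructor
  · intro h
    have key : (y - x) * (y + x + a) = 0 := by linear_combination -h
    rcases mul_eq_zero.mp key with h' | h'
    · left; linear_combination h'
    · right; linear_combination h'
  · rintro (rfl | rfl) <;> ring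

lemma diag (hp2 : ringChar (ZMod p) ≠ 2) {a : ZMod p} (ha : a ≠ 0) :
    ∑ x : ZMod p, ∑ y : ZMod p,
      (if x^2 + a*x = y^2 + a*y then
        quadraticChar (ZMod p) x * quadraticChar (ZMod p) y else 0)
      = (p : ℤ) - 2 - quadraticChar (ZMod p) (-1) := by
  classical
  set χ := quadraticChar (ZMod p) with hχ
  have h2 : (2 : ZMod p) ≠ 0 := Ring.two_ne_zero hp2
  have hsq : ∀ x : ZMod p, x ≠ 0 → χ x * χ x = 1 := by
    intro x hx
    rw [← map_mul]
    have : x * x = x ^ 2 := by ring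
    rw [this]
    exact quadraticChar_sq_one' hx
  have hinner : ∀ x : ZMod p,
      (∑ y : ZMod p, if x^2 + a*x = y^2 + a*y then χ x * χ y else 0)
        = (χ x * χ x + χ x * χ (-a-x)) - (if 2*x = -a then (1:ℤ) else 0) := by
    intro x
    rw [← Finset.sum_filter, filt a x]
    by_cases hc : 2*x = -a
    · have hx0 : x ≠ 0 := by
        intro h; apply ha; simpa [h] using hc.symm
      have hax : -a - x = x := by linear_combination -hc
      rw [hax, if_pos hc]
      have : ({x, x} : Finset (ZMod p)) = {x} := by simp
      rw [this, Finset.sum_singleton]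
      have := hsq x hx0
      linarith
    · have hne : x ≠ -a - x := by
        intro h; apply hc; linear_combination h
      rw [Finset.sum_pair hne, if_neg hc]
      ring
  rw [Finset.sum_congr rfl (fun x _ => hinner x), Finset.sum_sub_distrib,
    Finset.sum_add_distrib]
  have hA : ∑ x : ZMod p, χ x * χ x = (p : ℤ) - 1 := by
    have : ∀ x : ZMod p, χ x * χ x = 1 - (if x = 0 then (1:ℤ) else 0) := by
      intro x
      by_cases hx : x = 0
      · simp [hx, hχ]
      · rw [hsq x hx]; simp [hx]
    rw [Finset.sum_congr rfl (fun x _ => this x), Finset.sum_sub_distrib,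
      Finset.sum_const, Finset.sum_ite_eq' _ (0 : ZMod p) (fun _ => (1:ℤ))]
    simp [ZMod.card]
  have hB : ∑ x : ZMod p, χ x * χ (-a-x) = -χ (-1) := by
    have : ∀ x : ZMod p, χ x * χ (-a-x) = χ (-1) * χ (x * (x + a)) := by
      intro x
      have h1 : -a - x = -1 * (x + a) := by ring
      rw [h1, map_mul, map_mul]
      ring
    rw [Finset.sum_congr rfl (fun x _ => this x), ← Finset.mul_sum,
      sumA hp2 ha]
    ring
  have hC : ∑ x : ZMod p, (if 2*x = -a then (1:ℤ) else 0) = 1 := by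
    have : ∀ x : ZMod p, (if 2*x = -a then (1:ℤ) else 0)
        = (if x = 2⁻¹ * -a then (1:ℤ) else 0) := by
      intro x
      congr 1
      simp only [eq_iff_iff]
      constructor
      · intro h; field_simp [h2]; linear_combination h
      · intro h; field_simp [h2] at h; linear_combination h
    rw [Finset.sum_congr rfl (fun x _ => this x),
      Finset.sum_ite_eq' _ (2⁻¹ * -a : ZMod p) (fun _ => (1:ℤ))]
    simp
  rw [hA, hB, hC]
  ring

end aux3

section aux4
variable {p : ℕ} [Fact p.Prime]

lemma esum (hp2 : ringChar (ZMod p) ≠ 2) (a : ZMod p) :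
    ∑ l : ZMod p, ∑ x : ZMod p, quadraticChar (ZMod p) (x^3 + a*x^2 + l*x) = 0 := by
  classical
  set χ := quadraticChar (ZMod p) with hχ
  rw [Finset.sum_comm]
  have : ∀ x : ZMod p, ∑ l : ZMod p, χ (x^3 + a*x^2 + l*x) = 0 := by
    intro x
    have h1 : ∀ l : ZMod p, χ (x^3 + a*x^2 + l*x) = χ x * χ (x^2 + a*x + l) := by
      intro l
      rw [← map_mul]
      congr 1
      ring
    rw [Finset.sum_congr rfl (fun l _ => h1 l), ← Finset.mul_sum]
    have h2 : ∑ l : ZMod p, χ (x^2 + a*x + l) = ∑ t : ZMod p, χ t := by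
      refine Fintype.sum_bijective (fun l : ZMod p => x^2 + a*x + l)
        (Equiv.addLeft (x^2 + a*x)).bijective _ _ ?_
      intro l; rfl
    rw [h2, quadraticChar_sum_zero hp2, mul_zero]
  rw [Finset.sum_congr rfl (fun x _ => this x), Finset.sum_const, smul_zero]

lemma bigsum (hp2 : ringChar (ZMod p) ≠ 2) {a : ZMod p} (ha : a ≠ 0) :
    ∑ l : ZMod p, (∑ x : ZMod p, quadraticChar (ZMod p) (x^3 + a*x^2 + l*x))^2
      = (p : ℤ) * ((p : ℤ) - 2 - quadraticChar (ZMod p) (-1)) := by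
  classical
  set χ := quadraticChar (ZMod p) with hχ
  have hf : ∀ l x : ZMod p, χ (x^3 + a*x^2 + l*x) = χ x * χ (x^2 + a*x + l) := by
    intro l x
    rw [← map_mul]
    congr 1
    ring
  calc ∑ l : ZMod p, (∑ x : ZMod p, χ (x^3 + a*x^2 + l*x))^2
      = ∑ l : ZMod p, ∑ x : ZMod p, ∑ y : ZMod p,
          (χ x * χ (x^2 + a*x + l)) * (χ y * χ (y^2 + a*y + l)) := by
        refine Finset.sum_congr rfl (fun l _ => ?_)
        rw [pow_two, Finset.sum_mul_sum]
        exact Finset.sum_congr rfl (fun x _ => Finset.sum_congr rfl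
          (fun y _ => by rw [hf, hf]))
    _ = ∑ x : ZMod p, ∑ l : ZMod p, ∑ y : ZMod p,
          (χ x * χ (x^2 + a*x + l)) * (χ y * χ (y^2 + a*y + l)) := Finset.sum_comm
    _ = ∑ x : ZMod p, ∑ y : ZMod p, ∑ l : ZMod p,
          (χ x * χ (x^2 + a*x + l)) * (χ y * χ (y^2 + a*y + l)) :=
        Finset.sum_congr rfl (fun x _ => Finset.sum_comm)
    _ = ∑ x : ZMod p, ∑ y : ZMod p, (χ x * χ y) *
          ∑ l : ZMod p, χ (((x^2 + a*x) + l) * ((y^2 + a*y) + l)) := by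
        refine Finset.sum_congr rfl (fun x _ => Finset.sum_congr rfl (fun y _ => ?_))
        rw [Finset.mul_sum]
        refine Finset.sum_congr rfl (fun l _ => ?_)
        rw [map_mul]
        ring_nf
    _ = ∑ x : ZMod p, ∑ y : ZMod p, (χ x * χ y) *
          (if x^2 + a*x = y^2 + a*y then (p:ℤ) - 1 else -1) := by
        refine Finset.sum_congr rfl (fun x _ => Finset.sum_congr rfl (fun y _ => ?_))
        rw [sumK hp2]
    _ = ∑ x : ZMod p, ∑ y : ZMod p,
          ((p:ℤ) * (if x^2 + a*x = y^2 + a*y then χ x * χ y else 0) - χ x * χ y) := by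
        refine Finset.sum_congr rfl (fun x _ => Finset.sum_congr rfl (fun y _ => ?_))
        by_cases h : x^2 + a*x = y^2 + a*y <;> simp [h] <;> try ring
    _ = (p:ℤ) * ((p : ℤ) - 2 - χ (-1)) := by
        have e1 : ∀ x : ZMod p, ∑ y : ZMod p,
            ((p:ℤ) * (if x^2 + a*x = y^2 + a*y then χ x * χ y else 0) - χ x * χ y)
            = (p:ℤ) * (∑ y : ZMod p, (if x^2 + a*x = y^2 + a*y then χ x * χ y else 0))
              - χ x * ∑ y : ZMod p, χ y := by
          intro x
          rw [Finset.sum_sub_distrib, Finset.mul_sum, Finset.mul_sum]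
        rw [Finset.sum_congr rfl (fun x _ => e1 x), Finset.sum_sub_distrib,
          ← Finset.mul_sum, ← Finset.sum_mul, diag hp2 ha,
          quadraticChar_sum_zero hp2]
        rw [mul_zero, sub_zero, hχ]

theorem stmt6 (p : ℕ) [Fact p.Prime] (hp : 3 < p) (a : ZMod p) (ha : a ≠ 0) :
    ((((∑ l : ZMod p, (∑ x : ZMod p, quadraticChar (ZMod p) (x ^ 3 + a * x ^ 2 + l * x)) ^ 2) : ℤ) : ℚ) / p) -
      ((((∑ l : ZMod p, ∑ x : ZMod p, quadraticChar (ZMod p) (x ^ 3 + a * x ^ 2 + l * x)) : ℤ) : ℚ) / p) ^ 2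
      = p - 2 - quadraticChar (ZMod p) (-1) := by
  have hp2 : ringChar (ZMod p) ≠ 2 := by
    rw [ZMod.ringChar_zmod_n]
    omega
  rw [bigsum hp2 ha, esum hp2 a]
  have hp0 : (p : ℚ) ≠ 0 := by
    have := (Fact.out : p.Prime).pos
    positivity
  push_cast
  field_simp
  ring
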